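/- (Existence of a small teaching set for the maximum-margin classifier.) Let X ⊂ ℝ^d be finite and let f : X → {−1,1} be such that P(X) is nonempty, where for D ⊆ X one sets D^δ = {x − x' : x, x' ∈ D, f(x) = 1, f(x') = −1} and P(D) = {w ∈ ℝ^d : ⟨δ, w⟩ ≥ 2 for all δ ∈ D^δ}, and w*(D) denotes the minimum-Euclidean-norm element of P(D). Then there exists a subset D ⊆ X with |D| ≤ 2d + 2 such that w*(D) = w*(X). -/

import Mathlib

open RealInnerProductSpace

/-- The polyhedron `P(D) = {w : ⟨x - x', w⟩ ≥ 2 for all x, x' ∈ D with f(x) = 1, f(x') = -1}`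
determined by the labeled points of `D`. -/
def marginPolyhedron {d : ℕ} (f : EuclideanSpace ℝ (Fin d) → ℝ)
    (D : Finset (EuclideanSpace ℝ (Fin d))) : Set (EuclideanSpace ℝ (Fin d)) :=
  {w | ∀ x ∈ D, ∀ x' ∈ D, f x = 1 → f x' = -1 → 2 ≤ ⟪x - x', w⟫}

section Aux

variable {d : ℕ}

lemma marginPolyhedron_convex (f : EuclideanSpace ℝ (Fin d) → ℝ)
    (D : Finset (EuclideanSpace ℝ (Fin d))) : Convex ℝ (marginPolyhedron f D) := by
  intro w1 h1 w2 h2 a b ha hb hab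
  intro x hx x' hx' hfx hfx'
  have i1 := h1 x hx x' hx' hfx hfx'
  have i2 := h2 x hx x' hx' hfx hfx'
  rw [inner_add_right, real_inner_smul_right, real_inner_smul_right]
  nlinarith

lemma marginPolyhedron_isClosed (f : EuclideanSpace ℝ (Fin d) → ℝ)
    (D : Finset (EuclideanSpace ℝ (Fin d))) : IsClosed (marginPolyhedron f D) := by
  have : marginPolyhedron f D =
      ⋂ x ∈ D, ⋂ x' ∈ D, {w : EuclideanSpace ℝ (Fin d) | f x = 1 → f x' = -1 → 2 ≤ ⟪x - x', w⟫} := by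
    ext w; simp [marginPolyhedron]
  rw [this]
  refine isClosed_biInter fun x _ => isClosed_biInter fun x' _ => ?_
  by_cases h1 : f x = 1
  · by_cases h2 : f x' = -1
    · have : {w : EuclideanSpace ℝ (Fin d) | f x = 1 → f x' = -1 → 2 ≤ ⟪x - x', w⟫}
          = {w | 2 ≤ ⟪x - x', w⟫} := by ext w; simp [h1, h2]
      rw [this]
      exact isClosed_le continuous_const (continuous_const.inner continuous_id)
    · have : {w : EuclideanSpace ℝ (Fin d) | f x = 1 → f x' = -1 → 2 ≤ ⟪x - x', w⟫}
          = Set.univ := by ext w; simp [h2]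
      rw [this]; exact isClosed_univ
  · have : {w : EuclideanSpace ℝ (Fin d) | f x = 1 → f x' = -1 → 2 ≤ ⟪x - x', w⟫}
        = Set.univ := by ext w; simp [h1]
    rw [this]; exact isClosed_univ

lemma marginPolyhedron_antitone (f : EuclideanSpace ℝ (Fin d) → ℝ)
    {D X : Finset (EuclideanSpace ℝ (Fin d))} (h : D ⊆ X) :
    marginPolyhedron f X ⊆ marginPolyhedron f D :=
  fun _w hw x hx x' hx' h1 h2 => hw x (h hx) x' (h hx') h1 h2

/-- Existence of a minimum-norm point of a nonempty closed convex set. -/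
lemma exists_min_norm (K : Set (EuclideanSpace ℝ (Fin d))) (hne : K.Nonempty) (hc : IsClosed K)
    (hconv : Convex ℝ K) : ∃ w ∈ K, ∀ u ∈ K, ‖w‖ ≤ ‖u‖ := by
  obtain ⟨v, hv, hinf⟩ := exists_norm_eq_iInf_of_complete_convex hne hc.isComplete hconv 0
  refine ⟨v, hv, fun u hu => ?_⟩
  have h1 : ‖(0 : EuclideanSpace ℝ (Fin d)) - v‖ ≤ ‖(0 : EuclideanSpace ℝ (Fin d)) - u‖ := by
    rw [hinf]
    exact ciInf_le ⟨0, by rintro x ⟨y, rfl⟩; positivity⟩ (⟨u, hu⟩ : K)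
  simpa using h1

/-- Uniqueness of the minimum-norm point of a convex set. -/
lemma min_norm_unique {K : Set (EuclideanSpace ℝ (Fin d))} (hconv : Convex ℝ K)
    {a b : EuclideanSpace ℝ (Fin d)} (ha : a ∈ K) (hb : b ∈ K)
    (hamin : ∀ u ∈ K, ‖a‖ ≤ ‖u‖) (hbmin : ∀ u ∈ K, ‖b‖ ≤ ‖u‖) : a = b := by
  have hm : (1/2 : ℝ) • a + (1/2 : ℝ) • b ∈ K :=
    hconv ha hb (by norm_num) (by norm_num) (by norm_num)
  have h1 : ‖a‖ ≤ ‖(1/2 : ℝ) • a + (1/2 : ℝ) • b‖ := hamin _ hm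
  have h2 : ‖b‖ ≤ ‖a‖ := hbmin _ ha
  have h3 : ‖a‖ ≤ ‖b‖ := hamin _ hb
  have hpar : ‖a + b‖ ^ 2 + ‖a - b‖ ^ 2 = 2 * (‖a‖ ^ 2 + ‖b‖ ^ 2) := by
    have := parallelogram_law_with_norm ℝ a b
    nlinarith [this]
  have h4 : ‖(1/2 : ℝ) • a + (1/2 : ℝ) • b‖ = (1/2 : ℝ) * ‖a + b‖ := by
    rw [← smul_add, norm_smul]; simp
  have h5 : ‖a - b‖ = 0 := by
    nlinarith [norm_nonneg (a - b), norm_nonneg a, norm_nonneg (a + b)]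
  rw [← sub_eq_zero]; exact norm_eq_zero.mp h5

/-- An inner-product inequality valid on generators extends to the closure of the generated
nonnegative cone. -/
lemma inner_le_of_mem_closure_span (T : Finset (EuclideanSpace ℝ (Fin d)))
    (u w : EuclideanSpace ℝ (Fin d)) (h : ∀ δ ∈ T, ⟪δ, w⟫ ≤ ⟪δ, u⟫) :
    ∀ y ∈ closure (Submodule.span {c : ℝ // 0 ≤ c} (T : Set (EuclideanSpace ℝ (Fin d))) :
      Set (EuclideanSpace ℝ (Fin d))), ⟪y, w⟫ ≤ ⟪y, u⟫ := by
  set S : Set (EuclideanSpace ℝ (Fin d)) := {y | ⟪y, w⟫ ≤ ⟪y, u⟫} with hS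
  have hclosed : IsClosed S :=
    isClosed_le (continuous_id.inner continuous_const) (continuous_id.inner continuous_const)
  have hspan : (Submodule.span {c : ℝ // 0 ≤ c} (T : Set (EuclideanSpace ℝ (Fin d))) :
      Set (EuclideanSpace ℝ (Fin d))) ⊆ S := by
    intro y hy
    induction hy using Submodule.span_induction with
    | mem z hz => exact h z hz
    | zero => simp [hS]
    | add a b _ _ ha hb =>
        simp only [hS, Set.mem_setOf_eq, inner_add_left] at *
        exact add_le_add ha hb
    | smul c a _ ha =>
        obtain ⟨c, hc⟩ := c
        simp only [hS, Set.mem_setOf_eq] at *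
        have h1 : (⟨c, hc⟩ : {c : ℝ // 0 ≤ c}) • a = c • a := rfl
        rw [h1, real_inner_smul_left, real_inner_smul_left]
        exact mul_le_mul_of_nonneg_left ha hc
  intro y hy
  exact (hclosed.closure_subset_iff.mpr hspan) hy

/-- Farkas-type lemma: a vector in the double dual of a finite set lies in the closure of the
nonnegative cone it spans. -/
lemma mem_closure_span_of_dual (A : Finset (EuclideanSpace ℝ (Fin d)))
    (w : EuclideanSpace ℝ (Fin d))
    (h : ∀ u : EuclideanSpace ℝ (Fin d), (∀ δ ∈ A, 0 ≤ ⟪δ, u⟫) → 0 ≤ ⟪w, u⟫) :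
    w ∈ closure (Submodule.span {c : ℝ // 0 ≤ c} (A : Set (EuclideanSpace ℝ (Fin d))) :
      Set (EuclideanSpace ℝ (Fin d))) := by
  set P : PointedCone ℝ (EuclideanSpace ℝ (Fin d)) :=
    Submodule.span {c : ℝ // 0 ≤ c} (A : Set (EuclideanSpace ℝ (Fin d)))
  set K : ConvexCone ℝ (EuclideanSpace ℝ (Fin d)) :=
    (P : ConvexCone ℝ (EuclideanSpace ℝ (Fin d))).closure
  have hKset : (K : Set (EuclideanSpace ℝ (Fin d)))
      = closure (P : Set (EuclideanSpace ℝ (Fin d))) := rfl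
  by_contra hw
  have hwK : w ∉ K := by rw [← SetLike.mem_coe, hKset]; exact hw
  obtain ⟨y, hy1, hy2⟩ : ∃ y, (∀ x ∈ K, 0 ≤ ⟪x, y⟫) ∧ ⟪y, w⟫ < 0 := by
    obtain ⟨y, hy1, hy2⟩ := ProperCone.hyperplane_separation' (Submodule.closure
      (P : Submodule {c : ℝ // 0 ≤ c} (EuclideanSpace ℝ (Fin d))) : ProperCone ℝ _)
      (x₀ := w) (fun hc => hw (by
        rw [Submodule.mem_closure_iff, ← SetLike.mem_coe, Submodule.topologicalClosure_coe] at hc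
        exact hc))
    refine ⟨y, fun x hx => hy1 x (Submodule.mem_closure_iff.mpr ?_), ?_⟩
    · rw [← SetLike.mem_coe, Submodule.topologicalClosure_coe, ← hKset]; exact hx
    · rw [real_inner_comm]; exact hy2
  have : 0 ≤ ⟪w, y⟫ := by
    apply h
    intro δ hδ
    exact hy1 δ (by rw [← SetLike.mem_coe, hKset]; exact subset_closure (Submodule.subset_span hδ))
  rw [real_inner_comm] at hy2
  linarith

/-- Carathéodory's theorem for nonnegative cones in `ℝ^d`: every element of the cone spanned by
`A` lies in the cone spanned by a subset of at most `d + 1` elements. -/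
lemma caratheodory_cone (A : Finset (EuclideanSpace ℝ (Fin d))) (x : EuclideanSpace ℝ (Fin d))
    (hx : x ∈ Submodule.span {c : ℝ // 0 ≤ c} (A : Set (EuclideanSpace ℝ (Fin d)))) :
    ∃ T : Finset (EuclideanSpace ℝ (Fin d)), T ⊆ A ∧ T.card ≤ d + 1 ∧
      x ∈ Submodule.span {c : ℝ // 0 ≤ c} (T : Set (EuclideanSpace ℝ (Fin d))) := by
  by_cases hx0 : x = 0
  · exact ⟨∅, Finset.empty_subset _, by simp, by simp [hx0]⟩
  rw [Submodule.mem_span_set] at hx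
  obtain ⟨c, hsupp, hsum⟩ := hx
  set s : ℝ := ∑ i ∈ c.support, (c i : ℝ) with hs
  have hsumx : ∑ i ∈ c.support, (c i : ℝ) • i = x := by
    rw [← hsum, Finsupp.sum]
    exact Finset.sum_congr rfl fun i _ => rfl
  have hs0 : 0 < s := by
    rcases (Finset.sum_nonneg fun i _ => (c i).2).lt_or_eq with h | h
    · exact h
    · exfalso; apply hx0
      rw [← hsumx]
      apply Finset.sum_eq_zero
      intro i hi
      have hz : (c i : ℝ) = 0 :=
        (Finset.sum_eq_zero_iff_of_nonneg (fun j _ => (c j).2)).mp h.symm i hi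
      rw [hz, zero_smul]
  have hv : c.support.centerMass (fun i => (c i : ℝ)) id ∈
      convexHull ℝ (A : Set (EuclideanSpace ℝ (Fin d))) :=
    Finset.centerMass_mem_convexHull _ (fun i _ => (c i).2) (by rwa [← hs]) fun i hi => hsupp hi
  have hcm : c.support.centerMass (fun i => (c i : ℝ)) id = s⁻¹ • x := by
    rw [Finset.centerMass, ← hs, ← hsumx]
    simp
  rw [hcm, convexHull_eq_union] at hv
  simp only [Set.mem_iUnion] at hv
  obtain ⟨t, hts, hai, hvt⟩ := hv
  refine ⟨t, Finset.coe_subset.mp hts, ?_, ?_⟩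
  · have h1 : Fintype.card ↥t ≤ Module.finrank ℝ
        (vectorSpan ℝ (Set.range ((↑) : t → EuclideanSpace ℝ (Fin d)))) + 1 :=
      hai.card_le_finrank_succ
    have h2 : Module.finrank ℝ
        (vectorSpan ℝ (Set.range ((↑) : t → EuclideanSpace ℝ (Fin d)))) ≤ d := by
      have := Submodule.finrank_le
        (vectorSpan ℝ (Set.range ((↑) : t → EuclideanSpace ℝ (Fin d))))
      rwa [finrank_euclideanSpace_fin] at this
    simpa [Fintype.card_coe] using h1.trans (by omega)
  · have hsub : convexHull ℝ (t : Set (EuclideanSpace ℝ (Fin d))) ⊆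
        (Submodule.span {c : ℝ // 0 ≤ c} (t : Set (EuclideanSpace ℝ (Fin d))) :
          Set (EuclideanSpace ℝ (Fin d))) := by
      apply convexHull_min Submodule.subset_span
      exact ((Submodule.span {c : ℝ // 0 ≤ c} (t : Set (EuclideanSpace ℝ (Fin d))) :
        PointedCone ℝ (EuclideanSpace ℝ (Fin d))) :
        ConvexCone ℝ (EuclideanSpace ℝ (Fin d))).convex
    have hvmem := hsub hvt
    have hmem : (⟨s, hs0.le⟩ : {c : ℝ // 0 ≤ c}) • (s⁻¹ • x) ∈
        Submodule.span {c : ℝ // 0 ≤ c} (t : Set (EuclideanSpace ℝ (Fin d))) :=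
      Submodule.smul_mem _ _ hvmem
    have heq : (⟨s, hs0.le⟩ : {c : ℝ // 0 ≤ c}) • (s⁻¹ • x) = x := by
      have : (⟨s, hs0.le⟩ : {c : ℝ // 0 ≤ c}) • (s⁻¹ • x) = s • (s⁻¹ • x) := rfl
      rw [this, smul_inv_smul₀ hs0.ne']
    rwa [heq] at hmem

/-- KKT-type fact: the minimum-norm point of the margin polyhedron has nonnegative inner product
with every vector in the dual of the active constraints. -/
lemma min_norm_mem_dual_active (X : Finset (EuclideanSpace ℝ (Fin d)))
    (f : EuclideanSpace ℝ (Fin d) → ℝ) (w : EuclideanSpace ℝ (Fin d))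
    (hwP : w ∈ marginPolyhedron f X)
    (hwmin : ∀ u ∈ marginPolyhedron f X, ‖w‖ ≤ ‖u‖)
    (u : EuclideanSpace ℝ (Fin d))
    (hu : ∀ x ∈ X, ∀ x' ∈ X, f x = 1 → f x' = -1 → ⟪x - x', w⟫ = 2 → 0 ≤ ⟪x - x', u⟫) :
    0 ≤ ⟪w, u⟫ := by
  classical
  by_contra hneg
  push_neg at hneg
  set S : Finset (EuclideanSpace ℝ (Fin d) × EuclideanSpace ℝ (Fin d)) :=
    (X ×ˢ X).filter (fun p => f p.1 = 1 ∧ f p.2 = -1 ∧ ⟪p.1 - p.2, w⟫ ≠ 2) with hSdef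
  set g : EuclideanSpace ℝ (Fin d) × EuclideanSpace ℝ (Fin d) → ℝ :=
    fun p => (⟪p.1 - p.2, w⟫ - 2) / (‖p.1 - p.2‖ * ‖u‖ + 1) with hgdef
  have hgpos : ∀ p ∈ S, 0 < g p := by
    intro p hp
    simp only [hSdef, Finset.mem_filter, Finset.mem_product] at hp
    obtain ⟨⟨hp1, hp2⟩, hf1, hf2, hne⟩ := hp
    have := hwP p.1 hp1 p.2 hp2 hf1 hf2
    have hnum : 0 < ⟪p.1 - p.2, w⟫ - 2 := by
      rcases lt_or_eq_of_le this with h | h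
      · linarith
      · exact absurd h.symm hne
    have hden : 0 < ‖p.1 - p.2‖ * ‖u‖ + 1 := by positivity
    exact div_pos hnum hden
  set t₀ : ℝ := if hS : S.Nonempty then (S.image g).min' (hS.image g) else 1 with ht₀def
  have ht₀pos : 0 < t₀ := by
    rw [ht₀def]
    split_ifs with hS
    · obtain ⟨p, hp, hpe⟩ := Finset.mem_image.mp ((S.image g).min'_mem (hS.image g))
      rw [← hpe]; exact hgpos p hp
    · norm_num
  have ht₀le : ∀ p ∈ S, t₀ ≤ g p := by
    intro p hp
    rw [ht₀def]
    rw [dif_pos ⟨p, hp⟩]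
    exact Finset.min'_le _ _ (Finset.mem_image_of_mem g hp)
  set t₁ : ℝ := -⟪w, u⟫ / (‖u‖ ^ 2 + 1) with ht₁def
  have ht₁pos : 0 < t₁ := div_pos (by linarith) (by positivity)
  set t : ℝ := min t₀ t₁ with htdef
  have htpos : 0 < t := lt_min ht₀pos ht₁pos
  have hmem : w + t • u ∈ marginPolyhedron f X := by
    intro x hx x' hx' h1 h2
    rw [inner_add_right, real_inner_smul_right]
    have hge := hwP x hx x' hx' h1 h2
    by_cases hact : ⟪x - x', w⟫ = 2
    · have h0 := hu x hx x' hx' h1 h2 hact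
      nlinarith
    · have hpS : (x, x') ∈ S := by
        simp only [hSdef, Finset.mem_filter, Finset.mem_product]
        exact ⟨⟨hx, hx'⟩, h1, h2, hact⟩
      have hmin : t ≤ g (x, x') := (min_le_left _ _).trans (ht₀le _ hpS)
      have hCS : -(‖x - x'‖ * ‖u‖) ≤ ⟪x - x', u⟫ :=
        neg_le_of_abs_le (abs_real_inner_le_norm _ _)
      have hN : (0:ℝ) ≤ ‖x - x'‖ * ‖u‖ := by positivity
      rw [hgdef] at hmin
      simp only at hmin
      rw [le_div_iff₀ (by positivity)] at hmin
      nlinarith [mul_le_mul_of_nonneg_left hCS htpos.le]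
  have hle := hwmin _ hmem
  have hsq := norm_add_sq_real w (t • u)
  rw [real_inner_smul_right, norm_smul, Real.norm_eq_abs] at hsq
  have habs : |t| = t := abs_of_pos htpos
  rw [habs] at hsq
  have hle2 : ‖w‖ ^ 2 ≤ ‖w + t • u‖ ^ 2 := by
    apply pow_le_pow_left₀ (norm_nonneg _) hle
  have ht₁' : t * (‖u‖ ^ 2 + 1) ≤ -⟪w, u⟫ := by
    have : t ≤ t₁ := min_le_right _ _
    rw [ht₁def, le_div_iff₀ (by positivity)] at this
    linarith
  nlinarith [mul_pos htpos (neg_pos.mpr hneg)]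

end Aux

/-- Existence of a small teaching set for the maximum-margin classifier: for a finite
`X ⊂ ℝ^d` labeled by `f : X → {-1,1}` with `P(X)` nonempty, there is a subset `D ⊆ X` with
`|D| ≤ 2d + 2` whose maximum-margin (minimum-norm) solution coincides with that of `X`. -/
theorem exists_small_teaching_set
    (d : ℕ) (X : Finset (EuclideanSpace ℝ (Fin d)))
    (f : EuclideanSpace ℝ (Fin d) → ℝ)
    (hf : ∀ x ∈ X, f x = 1 ∨ f x = -1)
    (hne : (marginPolyhedron f X).Nonempty) :
    ∃ D ⊆ X, D.card ≤ 2 * d + 2 ∧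
      ∀ wD wX : EuclideanSpace ℝ (Fin d),
        (wD ∈ marginPolyhedron f D ∧ ∀ u ∈ marginPolyhedron f D, ‖wD‖ ≤ ‖u‖) →
        (wX ∈ marginPolyhedron f X ∧ ∀ u ∈ marginPolyhedron f X, ‖wX‖ ≤ ‖u‖) →
        wD = wX := by
  classical
  obtain ⟨w, hwP, hwmin⟩ :=
    exists_min_norm (marginPolyhedron f X) hne (marginPolyhedron_isClosed f X)
      (marginPolyhedron_convex f X)
  -- the active constraint vectors
  set A : Finset (EuclideanSpace ℝ (Fin d)) :=
    ((X ×ˢ X).filter (fun p => f p.1 = 1 ∧ f p.2 = -1 ∧ ⟪p.1 - p.2, w⟫ = 2)).image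
      (fun p => p.1 - p.2) with hAdef
  have hmemA : ∀ x ∈ X, ∀ x' ∈ X, f x = 1 → f x' = -1 → ⟪x - x', w⟫ = 2 → x - x' ∈ A := by
    intro x hx x' hx' h1 h2 hact
    rw [hAdef]
    have hp : (x, x') ∈ (X ×ˢ X).filter
        (fun p => f p.1 = 1 ∧ f p.2 = -1 ∧ ⟪p.1 - p.2, w⟫ = 2) := by
      simp only [Finset.mem_filter, Finset.mem_product]
      exact ⟨⟨hx, hx'⟩, h1, h2, hact⟩
    exact Finset.mem_image_of_mem _ hp
  have hAspec : ∀ δ ∈ A, ∃ p : EuclideanSpace ℝ (Fin d) × EuclideanSpace ℝ (Fin d),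
      p.1 ∈ X ∧ p.2 ∈ X ∧ f p.1 = 1 ∧ f p.2 = -1 ∧ ⟪p.1 - p.2, w⟫ = 2 ∧ p.1 - p.2 = δ := by
    intro δ hδ
    rw [hAdef] at hδ
    obtain ⟨p, hp, hpe⟩ := Finset.mem_image.mp hδ
    simp only [Finset.mem_filter, Finset.mem_product] at hp
    exact ⟨p, hp.1.1, hp.1.2, hp.2.1, hp.2.2.1, hp.2.2.2, hpe⟩
  -- Farkas: `w` lies in the closure of the cone spanned by the active constraints
  have hwA : w ∈ closure (Submodule.span {c : ℝ // 0 ≤ c} (A : Set (EuclideanSpace ℝ (Fin d))) :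
      Set (EuclideanSpace ℝ (Fin d))) := by
    apply mem_closure_span_of_dual
    intro u hu
    apply min_norm_mem_dual_active X f w hwP hwmin u
    intro x hx x' hx' h1 h2 hact
    exact hu _ (hmemA x hx x' hx' h1 h2 hact)
  -- use Carathéodory to pass to a union over small subsets, then pick one
  set 𝒯 : Finset (Finset (EuclideanSpace ℝ (Fin d))) :=
    A.powerset.filter (fun T => T.card ≤ d + 1) with h𝒯def
  set U : Set (EuclideanSpace ℝ (Fin d)) :=
    ⋃ T ∈ (𝒯 : Set (Finset (EuclideanSpace ℝ (Fin d)))),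
      closure (Submodule.span {c : ℝ // 0 ≤ c} ((T : Finset (EuclideanSpace ℝ (Fin d))) :
        Set (EuclideanSpace ℝ (Fin d))) : Set (EuclideanSpace ℝ (Fin d))) with hUdef
  have hUclosed : IsClosed U :=
    Set.Finite.isClosed_biUnion 𝒯.finite_toSet (fun T _ => isClosed_closure)
  have hsubU : (Submodule.span {c : ℝ // 0 ≤ c} (A : Set (EuclideanSpace ℝ (Fin d))) :
      Set (EuclideanSpace ℝ (Fin d))) ⊆ U := by
    intro x hx
    obtain ⟨T, hTA, hTcard, hxT⟩ := caratheodory_cone A x hx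
    rw [hUdef]
    apply Set.mem_biUnion (show T ∈ (𝒯 : Set (Finset (EuclideanSpace ℝ (Fin d)))) by
      simp only [h𝒯def, Finset.coe_filter, Set.mem_setOf_eq, Finset.mem_powerset]
      exact ⟨hTA, hTcard⟩)
    exact subset_closure hxT
  have hwU : w ∈ U := closure_minimal hsubU hUclosed hwA
  rw [hUdef] at hwU
  simp only [Set.mem_iUnion] at hwU
  obtain ⟨T, hT𝒯, hwT⟩ := hwU
  have hT : T ⊆ A ∧ T.card ≤ d + 1 := by
    simp only [h𝒯def, Finset.coe_filter, Set.mem_setOf_eq, Finset.mem_powerset] at hT𝒯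
    exact hT𝒯
  -- choose witnessing points for each active constraint vector in T
  set sel : {δ // δ ∈ T} → EuclideanSpace ℝ (Fin d) × EuclideanSpace ℝ (Fin d) :=
    fun δ => Classical.choose (hAspec δ.1 (hT.1 δ.2)) with hseldef
  have hselspec : ∀ δ : {δ // δ ∈ T}, (sel δ).1 ∈ X ∧ (sel δ).2 ∈ X ∧ f (sel δ).1 = 1 ∧
      f (sel δ).2 = -1 ∧ ⟪(sel δ).1 - (sel δ).2, w⟫ = 2 ∧ (sel δ).1 - (sel δ).2 = δ.1 :=
    fun δ => Classical.choose_spec (hAspec δ.1 (hT.1 δ.2))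
  set D : Finset (EuclideanSpace ℝ (Fin d)) :=
    T.attach.image (fun δ => (sel δ).1) ∪ T.attach.image (fun δ => (sel δ).2) with hDdef
  have hDX : D ⊆ X := by
    rw [hDdef]
    apply Finset.union_subset
    · intro x hx
      obtain ⟨δ, _, rfl⟩ := Finset.mem_image.mp hx
      exact (hselspec δ).1
    · intro x hx
      obtain ⟨δ, _, rfl⟩ := Finset.mem_image.mp hx
      exact (hselspec δ).2.1
  have hDcard : D.card ≤ 2 * d + 2 := by
    rw [hDdef]
    calc (T.attach.image (fun δ => (sel δ).1) ∪ T.attach.image (fun δ => (sel δ).2)).card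
        ≤ (T.attach.image (fun δ => (sel δ).1)).card
          + (T.attach.image (fun δ => (sel δ).2)).card := Finset.card_union_le _ _
      _ ≤ T.attach.card + T.attach.card :=
          Nat.add_le_add (Finset.card_image_le) (Finset.card_image_le)
      _ = T.card + T.card := by rw [Finset.card_attach]
      _ ≤ (d + 1) + (d + 1) := Nat.add_le_add hT.2 hT.2
      _ = 2 * d + 2 := by ring
  refine ⟨D, hDX, hDcard, ?_⟩
  rintro wD wX ⟨hwD, hwDmin⟩ ⟨hwX, hwXmin⟩
  -- `w` is a minimum-norm point of the smaller polyhedron as well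
  have hwPD : w ∈ marginPolyhedron f D := marginPolyhedron_antitone f hDX hwP
  have hwminD : ∀ u ∈ marginPolyhedron f D, ‖w‖ ≤ ‖u‖ := by
    intro u hu
    have hkey : ∀ δ ∈ T, ⟪δ, w⟫ ≤ ⟪δ, u⟫ := by
      intro δ hδ
      obtain ⟨hx1, hx2, hf1, hf2, hact, heq⟩ := hselspec ⟨δ, hδ⟩
      have hm1 : (sel ⟨δ, hδ⟩).1 ∈ D := by
        rw [hDdef]
        exact Finset.mem_union_left _ (Finset.mem_image_of_mem _ (Finset.mem_attach _ _))
      have hm2 : (sel ⟨δ, hδ⟩).2 ∈ D := by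
        rw [hDdef]
        exact Finset.mem_union_right _ (Finset.mem_image_of_mem _ (Finset.mem_attach _ _))
      have := hu _ hm1 _ hm2 hf1 hf2
      rw [heq] at this hact
      rw [hact]
      exact this
    have hiq := inner_le_of_mem_closure_span T u w hkey w hwT
    have h1 : ‖w‖ ^ 2 ≤ ⟪w, u⟫ := by
      rw [← real_inner_self_eq_norm_sq]
      exact hiq
    have h2 : ⟪w, u⟫ ≤ ‖w‖ * ‖u‖ := real_inner_le_norm w u
    by_contra hc
    push_neg at hc
    nlinarith [norm_nonneg u, norm_nonneg w]
  -- conclude by uniqueness of minimum-norm points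
  have e1 : wD = w :=
    min_norm_unique (marginPolyhedron_convex f D) hwD hwPD hwDmin hwminD
  have e2 : wX = w :=
    min_norm_unique (marginPolyhedron_convex f X) hwX hwP hwXmin hwmin
  rw [e1, e2]
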